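/- If a countable group G acts effectively (faithfully) on the real line ℝ by orientation-preserving homeomorphisms, then G is left-orderable; that is, there exists a total order < on G such that for all g, h, h' in G, h < h' implies g·h < g·h'. -/

import Mathlib

/-- If a countable group `G` acts effectively (faithfully) on the real line `ℝ` by
orientation-preserving homeomorphisms, then `G` is left-orderable: there is a strict
total order on `G` invariant under left multiplication.  An action by homeomorphisms
is encoded as a homomorphism to `Equiv.Perm ℝ` whose values, together with their
inverses, are continuous; orientation-preserving means strictly monotone increasing. -/
theorem countable_group_faithful_orientation_preserving_action_on_real_line_leftOrderable
    (G : Type) [Group G] [Countable G] (φ : G →* Equiv.Perm ℝ)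
    (hcont : ∀ g : G, Continuous (φ g))
    (hcont' : ∀ g : G, Continuous ((φ g).symm))
    (horient : ∀ g : G, StrictMono (φ g))
    (hinj : Function.Injective φ) :
    ∃ r : G → G → Prop, IsStrictTotalOrder G r ∧
      ∀ g h h' : G, r h h' → r (g * h) (g * h') := by
  classical
  -- a surjection from ℕ onto pairs of group elements
  obtain ⟨f, hf⟩ := exists_surjective_nat (G × G)
  -- pick a separating point for each pair (when possible)
  set x : ℕ → ℝ := fun n =>
    if h : ∃ t : ℝ, φ (f n).1 t ≠ φ (f n).2 t then h.choose else 0 with hx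
  -- separation property
  have hsep : ∀ g h : G, g ≠ h → ∃ n, φ g (x n) ≠ φ h (x n) := by
    intro g h hgh
    obtain ⟨n, hn⟩ := hf (g, h)
    refine ⟨n, ?_⟩
    have hex : ∃ t : ℝ, φ (f n).1 t ≠ φ (f n).2 t := by
      by_contra hc
      push_neg at hc
      apply hgh
      apply hinj
      ext t
      have := hc t
      rw [hn] at this
      exact this
    have key : φ (f n).1 (x n) ≠ φ (f n).2 (x n) := by
      simp only [hx, dif_pos hex]
      exact hex.choose_spec
    rw [hn] at key
    exact key
  -- the lexicographic order
  set r : G → G → Prop := fun g h =>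
    ∃ n, φ g (x n) < φ h (x n) ∧ ∀ m < n, φ g (x m) = φ h (x m) with hr
  have htri : IsTrichotomous G r := by
    constructor
    intro g h
    by_cases hgh : g = h
    · exact fun _ _ => hgh
    · have hne : {n | φ g (x n) ≠ φ h (x n)}.Nonempty := hsep g h hgh
      obtain ⟨n, hn, hmin⟩ := Nat.lt_wfRel.wf.has_min _ hne
      have heq : ∀ m < n, φ g (x m) = φ h (x m) := by
        intro m hm
        by_contra hc
        exact hmin m hc hm
      rcases lt_or_gt_of_ne hn with h1 | h1
      · exact fun h2 _ => (h2 ⟨n, h1, heq⟩).elim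
      · exact fun _ h3 => (h3 ⟨n, h1, fun m hm => (heq m hm).symm⟩).elim
  have hirr : IsIrrefl G r := by
    constructor
    rintro g ⟨n, hlt, -⟩
    exact lt_irrefl _ hlt
  have htrans : IsTrans G r := by
    constructor
    rintro a b c ⟨n, hn, hn'⟩ ⟨m, hm, hm'⟩
    refine ⟨min n m, ?_, ?_⟩
    · rcases lt_trichotomy n m with h1 | h1 | h1
      · rw [min_eq_left h1.le]
        exact hn.trans_le (hm' n h1).le
      · subst h1; rw [min_self]; exact hn.trans hm
      · rw [min_eq_right h1.le]
        exact (hn' m h1).le.trans_lt hm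
    · intro k hk
      rw [lt_min_iff] at hk
      exact (hn' k hk.1).trans (hm' k hk.2)
  refine ⟨r, { toTrichotomous := htri, toIsStrictOrder := { toIrrefl := hirr, toIsTrans := htrans } }, ?_⟩
  rintro g h h' ⟨n, hn, hn'⟩
  refine ⟨n, ?_, ?_⟩
  · have e1 : φ (g * h) (x n) = φ g (φ h (x n)) := by rw [map_mul]; rfl
    have e2 : φ (g * h') (x n) = φ g (φ h' (x n)) := by rw [map_mul]; rfl
    rw [e1, e2]
    exact horient g hn
  · intro m hm
    have e1 : φ (g * h) (x m) = φ g (φ h (x m)) := by rw [map_mul]; rfl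
    have e2 : φ (g * h') (x m) = φ g (φ h' (x m)) := by rw [map_mul]; rfl
    rw [e1, e2, hn' m hm]
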